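/- arXiv:1611.02423 — 3 statements merged into one kernel-verified Lean document; each statement's English description precedes it below -/
import Mathlib

section
/- For integers r ≥ 2 and k ≥ 1 with rk ≥ 4, if x is an integer with x ≡ 2^r − 1 (mod 2^r) and x ≥ 3^r, then Σ_{d^r ≤ x} μ(d)/d^{rk} · {x/d^r} < −1/2^{rk+1} + 1/2^{r(k+1)} < 0. -/
open Finset

private lemma cube_tail (N : ℕ) (hN : 3 ≤ N) :
    ∑ d ∈ Finset.Icc 4 N, (1:ℝ) / (d:ℝ)^3 ≤ 1/24 - 1/(2*(N:ℝ)*((N:ℝ)+1)) := by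
  induction N, hN using Nat.le_induction with
  | base => norm_num
  | succ N hN ih =>
    rw [Finset.sum_Icc_succ_top (by omega)]
    have hn : (3:ℝ) ≤ (N:ℝ) := by exact_mod_cast hN
    push_cast
    have key : (1:ℝ)/((N:ℝ)+1)^3 ≤ 1/(2*(N:ℝ)*((N:ℝ)+1)) - 1/(2*((N:ℝ)+1)*((N:ℝ)+1+1)) := by
      have h1 : (1:ℝ)/(2*(N:ℝ)*((N:ℝ)+1)) - 1/(2*((N:ℝ)+1)*((N:ℝ)+1+1)) =
          1/((N:ℝ)*((N:ℝ)+1)*((N:ℝ)+2)) := by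
        field_simp
        ring
      rw [h1]
      have hNpos : (0:ℝ) < (N:ℝ) := by linarith
      apply one_div_le_one_div_of_le (by positivity)
      nlinarith
    linarith

private lemma tail_bound (m : ℕ) (hm : 4 ≤ m) (N : ℕ) :
    ∑ d ∈ Finset.Icc 3 N, (1:ℝ) / (d:ℝ)^m < 1/2^(m+1) := by
  rcases lt_or_ge N 3 with hN | hN
  · have : Finset.Icc 3 N = ∅ := by
      apply Finset.Icc_eq_empty; omega
    rw [this]
    simp only [Finset.sum_empty]
    positivity
  · have hsplit : Finset.Icc 3 N = insert 3 (Finset.Icc 4 N) := by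
      ext d; simp only [Finset.mem_Icc, Finset.mem_insert]; omega
    rw [hsplit, Finset.sum_insert (by simp)]
    -- bound the tail sum by (1/4)^(m-3) * sum of 1/d^3
    have h1 : ∑ d ∈ Finset.Icc 4 N, (1:ℝ) / (d:ℝ)^m ≤
        (1/4:ℝ)^(m-3) * ∑ d ∈ Finset.Icc 4 N, (1:ℝ)/(d:ℝ)^3 := by
      rw [Finset.mul_sum]
      apply Finset.sum_le_sum
      intro d hd
      have hd4 : (4:ℝ) ≤ (d:ℝ) := by
        have := (Finset.mem_Icc.mp hd).1; exact_mod_cast this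
      have hdpos : (0:ℝ) < (d:ℝ) := by linarith
      have hpow : (4:ℝ)^(m-3) * (d:ℝ)^3 ≤ (d:ℝ)^m := by
        have : (d:ℝ)^m = (d:ℝ)^(m-3) * (d:ℝ)^3 := by
          rw [← pow_add]; congr 1; omega
        rw [this]
        have : (4:ℝ)^(m-3) ≤ (d:ℝ)^(m-3) := pow_le_pow_left₀ (by norm_num) hd4 _
        nlinarith [pow_pos hdpos 3]
      rw [div_pow, one_pow, div_mul_div_comm, one_mul]
      apply one_div_le_one_div_of_le (by positivity)
      exact hpow
    have h2 : ∑ d ∈ Finset.Icc 4 N, (1:ℝ)/(d:ℝ)^3 ≤ 1/24 := by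
      have := cube_tail N hN
      have hNpos : (0:ℝ) < (N:ℝ) := by
        have : (3:ℝ) ≤ (N:ℝ) := by exact_mod_cast hN
        linarith
      have : (0:ℝ) ≤ 1/(2*(N:ℝ)*((N:ℝ)+1)) := by positivity
      linarith [cube_tail N hN]
    have h3 : ∑ d ∈ Finset.Icc 4 N, (1:ℝ) / (d:ℝ)^m ≤ (1/4:ℝ)^(m-3) * (1/24) := by
      calc ∑ d ∈ Finset.Icc 4 N, (1:ℝ) / (d:ℝ)^m
          ≤ (1/4:ℝ)^(m-3) * ∑ d ∈ Finset.Icc 4 N, (1:ℝ)/(d:ℝ)^3 := h1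
        _ ≤ (1/4:ℝ)^(m-3) * (1/24) := by
            apply mul_le_mul_of_nonneg_left h2 (by positivity)
    -- now the numeric bound : 1/3^m + (1/4)^(m-3)/24 < 1/2^(m+1)
    have hnum : (1:ℝ)/3^m + (1/4:ℝ)^(m-3) * (1/24) < 1/2^(m+1) := by
      obtain ⟨j, rfl⟩ : ∃ j, m = j + 4 := ⟨m - 4, by omega⟩
      have hm3 : j + 4 - 3 = j + 1 := by omega
      rw [hm3]
      have t2 : (0:ℝ) < 2^j := by positivity
      have h23 : (2:ℝ)^j ≤ 3^j := pow_le_pow_left₀ (by norm_num) (by norm_num) _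
      have h24 : (2:ℝ)^j ≤ 4^j := pow_le_pow_left₀ (by norm_num) (by norm_num) _
      have e1 : (1:ℝ)/3^(j+4) = 1/81 * (1/3^j) := by
        rw [pow_add]; field_simp; ring
      have e2 : ((1:ℝ)/4)^(j+1) * (1/24) = 1/96 * (1/4^j) := by
        rw [div_pow, one_pow, pow_add]; field_simp; ring
      have e3 : (1:ℝ)/2^(j+4+1) = 1/32 * (1/2^j) := by
        rw [pow_add]; field_simp; ring
      rw [e1, e2, e3]
      have b1 : (1:ℝ)/3^j ≤ 1/2^j := one_div_le_one_div_of_le t2 h23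
      have b2 : (1:ℝ)/4^j ≤ 1/2^j := one_div_le_one_div_of_le t2 h24
      have b3 : (0:ℝ) < 1/2^j := by positivity
      nlinarith
    calc (1:ℝ)/((3:ℕ):ℝ)^m + ∑ d ∈ Finset.Icc 4 N, (1:ℝ) / (d:ℝ)^m
        ≤ 1/3^m + (1/4:ℝ)^(m-3) * (1/24) := by
          have h33 : ((3:ℕ):ℝ) = 3 := by norm_num
          rw [h33]; linarith
      _ < 1/2^(m+1) := hnum

theorem sum_moebius_fract_neg_of_cong (r k : ℕ) (hr : 2 ≤ r) (hk : 1 ≤ k) (hrk : 4 ≤ r * k)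
    (x : ℕ) (hx : x % 2 ^ r = 2 ^ r - 1) (hx3 : 3 ^ r ≤ x) :
    (∑ d ∈ Finset.Icc 1 x, if d ^ r ≤ x then
        (ArithmeticFunction.moebius d : ℝ) / (d : ℝ) ^ (r * k) *
          Int.fract ((x : ℝ) / (d : ℝ) ^ r) else 0) <
      -1 / 2 ^ (r * k + 1) + 1 / 2 ^ (r * (k + 1)) ∧
    (-1 / 2 ^ (r * k + 1) + 1 / 2 ^ (r * (k + 1)) : ℝ) < 0 := by
  set m := r * k with hm
  have h2r1 : (1:ℕ) ≤ 2^r := Nat.one_le_two_pow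
  have h2rx : 2^r ≤ x := le_trans (Nat.pow_le_pow_left (by norm_num) r) hx3
  have hx9 : 9 ≤ x := le_trans (by calc (9:ℕ) = 3^2 := by norm_num
                                      _ ≤ 3^r := Nat.pow_le_pow_right (by norm_num) hr) hx3
  constructor
  · -- main inequality
    have hset : Finset.Icc 1 x = insert 1 (insert 2 (Finset.Icc 3 x)) := by
      ext d; simp only [Finset.mem_Icc, Finset.mem_insert]; omega
    rw [hset, Finset.sum_insert (by simp), Finset.sum_insert (by simp)]
    -- term d = 1
    have t1 : (if 1 ^ r ≤ x then
        (ArithmeticFunction.moebius 1 : ℝ) / ((1:ℕ) : ℝ) ^ m *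
          Int.fract ((x : ℝ) / ((1:ℕ) : ℝ) ^ r) else 0) = 0 := by
      rw [if_pos (by simp; omega)]
      simp [Int.fract_natCast]
    -- term d = 2
    have hfr : Int.fract ((x:ℝ) / ((2:ℕ):ℝ)^r) = ((2:ℝ)^r - 1)/2^r := by
      have hq : (x:ℝ) = 2^r * ((x / 2^r : ℕ):ℝ) + ((2:ℝ)^r - 1) := by
        have h := Nat.div_add_mod x (2^r)
        rw [hx] at h
        have h' : ((2^r * (x / 2^r) + (2^r - 1) : ℕ) : ℝ) = (x:ℝ) := by exact_mod_cast congrArg Nat.cast h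
        rw [← h']
        push_cast [h2r1]
        ring
      have h2pos : (0:ℝ) < 2^r := by positivity
      have : (x:ℝ) / ((2:ℕ):ℝ)^r = ((2:ℝ)^r - 1)/2^r + ((x / 2^r : ℕ) : ℝ) := by
        push_cast
        rw [hq]; field_simp; ring
      rw [this, Int.fract_add_natCast, Int.fract_eq_self.mpr]
      constructor
      · apply div_nonneg _ (le_of_lt h2pos)
        have : (1:ℝ) ≤ 2^r := one_le_pow₀ (by norm_num)
        linarith
      · rw [div_lt_one h2pos]; linarith
    have t2 : (if 2 ^ r ≤ x then
        (ArithmeticFunction.moebius 2 : ℝ) / ((2:ℕ) : ℝ) ^ m *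
          Int.fract ((x : ℝ) / ((2:ℕ) : ℝ) ^ r) else 0) =
        (-1) / 2 ^ m * (((2:ℝ)^r - 1)/2^r) := by
      rw [if_pos h2rx, hfr, ArithmeticFunction.moebius_apply_prime Nat.prime_two]
      push_cast
      ring
    rw [t1, t2]
    -- bound the rest
    have hR1 : (∑ d ∈ Finset.Icc 3 x, if d ^ r ≤ x then
        (ArithmeticFunction.moebius d : ℝ) / (d : ℝ) ^ m *
          Int.fract ((x : ℝ) / (d : ℝ) ^ r) else 0) ≤
        ∑ d ∈ Finset.Icc 3 x, (1:ℝ)/(d:ℝ)^m := by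
      apply Finset.sum_le_sum
      intro d hd
      have hd3 : 3 ≤ d := (Finset.mem_Icc.mp hd).1
      have hdpos : (0:ℝ) < (d:ℝ)^m := by
        apply pow_pos; exact_mod_cast Nat.lt_of_lt_of_le (by norm_num) hd3
      split
      · calc (ArithmeticFunction.moebius d : ℝ) / (d : ℝ) ^ m *
              Int.fract ((x : ℝ) / (d : ℝ) ^ r)
            ≤ |(ArithmeticFunction.moebius d : ℝ) / (d : ℝ) ^ m *
              Int.fract ((x : ℝ) / (d : ℝ) ^ r)| := le_abs_self _
          _ = |(ArithmeticFunction.moebius d : ℝ)| / (d : ℝ) ^ m *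
              Int.fract ((x : ℝ) / (d : ℝ) ^ r) := by
              rw [abs_mul, abs_div, abs_of_pos hdpos,
                abs_of_nonneg (Int.fract_nonneg ((x:ℝ)/(d:ℝ)^r))]
          _ ≤ 1 / (d : ℝ) ^ m * 1 := by
              have habs : |(ArithmeticFunction.moebius d : ℝ)| ≤ 1 := by
                have := ArithmeticFunction.abs_moebius_le_one (n := d)
                exact_mod_cast this
              apply mul_le_mul _ (le_of_lt (Int.fract_lt_one _)) (Int.fract_nonneg _) (by positivity)
              gcongr
          _ = 1 / (d:ℝ)^m := by ring
      · positivity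
    have hR2 : ∑ d ∈ Finset.Icc 3 x, (1:ℝ)/(d:ℝ)^m < 1/2^(m+1) := tail_bound m hrk x
    have key : (-1:ℝ) / 2 ^ m * (((2:ℝ)^r - 1)/2^r) + 1/2^(m+1) =
        -1 / 2 ^ (m + 1) + 1 / 2 ^ (r * (k + 1)) := by
      have hexp : r * (k + 1) = m + r := by rw [hm]; ring
      rw [hexp, pow_add, pow_add]
      have h2m : (2:ℝ)^m ≠ 0 := by positivity
      have h2r : (2:ℝ)^r ≠ 0 := by positivity
      field_simp
      ring
    rw [← key]
    linarith
  · -- second inequality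
    have hlt : m + 1 < r * (k + 1) := by
      have : r * (k + 1) = m + r := by rw [hm]; ring
      omega
    have : (1:ℝ)/2^(r*(k+1)) < 1/2^(m+1) := by
      apply one_div_lt_one_div_of_lt (by positivity)
      exact pow_lt_pow_right₀ (by norm_num) hlt
    have e : (-1:ℝ)/2^(m+1) + 1/2^(r*(k+1)) = 1/2^(r*(k+1)) - 1/2^(m+1) := by ring
    rw [e]
    linarith
end

section
/- For integers r ≥ 1 and k ≥ 1 with rk ≥ 2, the sum Σ_{d^r ≤ x} μ(d)(x/d^r)^k {x/d^r} is Ω(x^k), i.e. limsup_{x→∞} |Σ_{d^r ≤ x} μ(d)(x/d^r)^k {x/d^r}| / x^k > 0. -/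
open Filter

private lemma sum_inv_sq_le (N : ℕ) :
    (∑ d ∈ Finset.Icc 2 N, ((d : ℝ) ^ 2)⁻¹) ≤ 3 / 4 - ((max N 2 : ℕ) : ℝ)⁻¹ := by
  induction N with
  | zero => norm_num
  | succ n ih =>
    rcases lt_or_ge n 2 with h2 | h2
    · interval_cases n
      · norm_num
      · rw [show Finset.Icc 2 2 = {2} by rfl]
        norm_num
    · rw [Finset.sum_Icc_succ_top (by omega)]
      have hmax : max n 2 = n := max_eq_left h2
      have hmax' : max (n + 1) 2 = n + 1 := max_eq_left (by omega)
      rw [hmax'] ; rw [hmax] at ih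
      have hn : (0 : ℝ) < n := by positivity
      have key : (((n : ℝ) + 1) ^ 2)⁻¹ ≤ (n : ℝ)⁻¹ - ((n : ℝ) + 1)⁻¹ := by
        rw [inv_sub_inv (by positivity) (by positivity)]
        rw [div_eq_mul_inv]
        ring_nf
        gcongr <;> nlinarith
      push_cast
      linarith

private lemma sum_inv_sq_le' (N : ℕ) :
    (∑ d ∈ Finset.Icc 2 N, ((d : ℝ) ^ 2)⁻¹) ≤ 3 / 4 := by
  have h := sum_inv_sq_le N
  have : (0 : ℝ) ≤ ((max N 2 : ℕ) : ℝ)⁻¹ := by positivity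
  linarith

private lemma term_bound (r k : ℕ) (hrk : 2 ≤ r * k) (x : ℝ) (hx : 0 ≤ x)
    (d : ℕ) (hd : 1 ≤ d) :
    |if (d : ℝ) ^ r ≤ x then
        (ArithmeticFunction.moebius d : ℝ) * (x / (d : ℝ) ^ r) ^ k *
          Int.fract (x / (d : ℝ) ^ r) else 0| ≤ x ^ k * ((d : ℝ) ^ 2)⁻¹ := by
  have hd1 : (1 : ℝ) ≤ (d : ℝ) := by exact_mod_cast hd
  have hdpos : (0 : ℝ) < (d : ℝ) ^ r := by positivity
  split_ifs with h
  · set t := x / (d : ℝ) ^ r with ht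
    have ht0 : 0 ≤ t := div_nonneg hx hdpos.le
    have hfr : 0 ≤ Int.fract t := Int.fract_nonneg t
    have hfr1 : Int.fract t ≤ 1 := (Int.fract_lt_one t).le
    have hmu : |(ArithmeticFunction.moebius d : ℝ)| ≤ 1 := by
      have := ArithmeticFunction.abs_moebius_le_one (n := d)
      exact_mod_cast this
    calc |(ArithmeticFunction.moebius d : ℝ) * t ^ k * Int.fract t|
        = |(ArithmeticFunction.moebius d : ℝ)| * t ^ k * Int.fract t := by
          rw [abs_mul, abs_mul, abs_of_nonneg (pow_nonneg ht0 k), abs_of_nonneg hfr]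
      _ ≤ 1 * t ^ k * 1 := by
          apply mul_le_mul (mul_le_mul hmu le_rfl (by positivity) (by norm_num)) hfr1 hfr
          positivity
      _ = t ^ k := by ring
      _ = x ^ k / (d : ℝ) ^ (r * k) := by
          rw [ht, div_pow, ← pow_mul]
      _ ≤ x ^ k / (d : ℝ) ^ 2 := by
          apply div_le_div_of_nonneg_left (by positivity) (by positivity)
          exact pow_le_pow_right₀ hd1 hrk
      _ = x ^ k * ((d : ℝ) ^ 2)⁻¹ := by rw [div_eq_mul_inv]
  · simp only [abs_zero]
    positivity

private lemma tail_bound_s9 (r k : ℕ) (hrk : 2 ≤ r * k) (x : ℝ) (hx : 0 ≤ x) (N : ℕ) :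
    |∑ d ∈ Finset.Icc 2 N, if (d : ℝ) ^ r ≤ x then
        (ArithmeticFunction.moebius d : ℝ) * (x / (d : ℝ) ^ r) ^ k *
          Int.fract (x / (d : ℝ) ^ r) else 0| ≤ 3 / 4 * x ^ k := by
  calc |∑ d ∈ Finset.Icc 2 N, if (d : ℝ) ^ r ≤ x then
        (ArithmeticFunction.moebius d : ℝ) * (x / (d : ℝ) ^ r) ^ k *
          Int.fract (x / (d : ℝ) ^ r) else 0|
      ≤ ∑ d ∈ Finset.Icc 2 N, |if (d : ℝ) ^ r ≤ x then
        (ArithmeticFunction.moebius d : ℝ) * (x / (d : ℝ) ^ r) ^ k *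
          Int.fract (x / (d : ℝ) ^ r) else 0| := Finset.abs_sum_le_sum_abs _ _
    _ ≤ ∑ d ∈ Finset.Icc 2 N, x ^ k * ((d : ℝ) ^ 2)⁻¹ := by
        apply Finset.sum_le_sum
        intro d hd
        exact term_bound r k hrk x hx d (by have := (Finset.mem_Icc.1 hd).1; omega)
    _ = x ^ k * ∑ d ∈ Finset.Icc 2 N, ((d : ℝ) ^ 2)⁻¹ := by rw [Finset.mul_sum]
    _ ≤ x ^ k * (3 / 4) :=
        mul_le_mul_of_nonneg_left (sum_inv_sq_le' N) (by positivity)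
    _ = 3 / 4 * x ^ k := by ring

theorem sum_moebius_fract_omega (r k : ℕ) (hr : 1 ≤ r) (hk : 1 ≤ k) (hrk : 2 ≤ r * k) :
    0 < limsup (fun x : ℝ =>
        |∑ d ∈ Finset.Icc 1 ⌊x⌋₊, if (d : ℝ) ^ r ≤ x then
            (ArithmeticFunction.moebius d : ℝ) * (x / (d : ℝ) ^ r) ^ k *
              Int.fract (x / (d : ℝ) ^ r) else 0| / x ^ k) atTop := by
  set f : ℝ → ℝ := fun x =>
        |∑ d ∈ Finset.Icc 1 ⌊x⌋₊, if (d : ℝ) ^ r ≤ x then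
            (ArithmeticFunction.moebius d : ℝ) * (x / (d : ℝ) ^ r) ^ k *
              Int.fract (x / (d : ℝ) ^ r) else 0| / x ^ k with hf
  have hsplit : ∀ N : ℕ, 1 ≤ N → Finset.Icc 1 N = insert 1 (Finset.Icc 2 N) := by
    intro N hN
    ext m
    simp only [Finset.mem_Icc, Finset.mem_insert]
    omega
  have h1notin : ∀ N : ℕ, (1 : ℕ) ∉ Finset.Icc 2 N := by
    intro N
    simp [Finset.mem_Icc]
  have hbdd : IsBoundedUnder (· ≤ ·) atTop f := by
    refine ⟨2, eventually_atTop.2 ⟨1, fun x hx => ?_⟩⟩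
    have hx0 : (0 : ℝ) ≤ x := by linarith
    have hxk : (0 : ℝ) < x ^ k := by positivity
    have hN : 1 ≤ ⌊x⌋₊ := Nat.le_floor (by exact_mod_cast hx)
    rw [hf]
    simp only
    rw [hsplit _ hN, Finset.sum_insert (h1notin _)]
    simp only [Set.mem_setOf_eq]
    rw [div_le_iff₀ hxk]
    refine le_trans (abs_add_le _ _) ?_
    have h1 := term_bound r k hrk x hx0 1 le_rfl
    have h2 := tail_bound_s9 r k hrk x hx0 ⌊x⌋₊
    rw [show (((1 : ℕ) : ℝ) ^ 2)⁻¹ = 1 by norm_num, mul_one] at h1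
    linarith
  have hfreq : ∃ᶠ x in atTop, (1 : ℝ) / 10 ≤ f x := by
    rw [frequently_atTop]
    intro a
    obtain ⟨m, hm1, hma⟩ : ∃ m : ℕ, 1 ≤ m ∧ a ≤ (m : ℝ) := by
      obtain ⟨m, hm⟩ := exists_nat_ge (max a 1)
      exact ⟨m, by exact_mod_cast le_trans (le_max_right a 1) hm,
        le_trans (le_max_left a 1) hm⟩
    obtain ⟨x, hxdef⟩ : ∃ x : ℝ, x = (m : ℝ) + 9 / 10 := ⟨_, rfl⟩
    refine ⟨x, by rw [hxdef]; linarith, ?_⟩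
    have hx1 : (1 : ℝ) ≤ x := by
      have : (1 : ℝ) ≤ (m : ℝ) := by exact_mod_cast hm1
      linarith
    have hx0 : (0 : ℝ) ≤ x := by linarith
    have hxk : (0 : ℝ) < x ^ k := by positivity
    have hfloor : ⌊x⌋₊ = m := by
      rw [hxdef]
      rw [Nat.floor_eq_iff (by positivity)]
      constructor
      · linarith
      · push_cast; linarith
    have hfract : Int.fract x = 9 / 10 := by
      rw [hxdef]
      rw [show ((m : ℝ) + 9 / 10) = (9 / 10 : ℝ) + (m : ℤ) by push_cast; ring]
      rw [Int.fract_add_intCast]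
      rw [Int.fract_eq_self]
      norm_num
    rw [hf]
    simp only
    rw [hfloor, hsplit _ hm1, Finset.sum_insert (h1notin _)]
    have hcast1 : (x / ((1 : ℕ) : ℝ) ^ r) = x := by norm_num
    have hterm1 : (if ((1 : ℕ) : ℝ) ^ r ≤ x then
            (ArithmeticFunction.moebius 1 : ℝ) * (x / ((1 : ℕ) : ℝ) ^ r) ^ k *
              Int.fract (x / ((1 : ℕ) : ℝ) ^ r) else 0) = 9 / 10 * x ^ k := by
      rw [if_pos (by push_cast; rw [one_pow]; linarith)]
      rw [hcast1, hfract, ArithmeticFunction.moebius_apply_one]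
      push_cast
      ring
    rw [hterm1]
    rw [le_div_iff₀ hxk]
    have htail := tail_bound_s9 r k hrk x hx0 m
    have habs : 9 / 10 * x ^ k - 3 / 4 * x ^ k ≤
        |9 / 10 * x ^ k + ∑ d ∈ Finset.Icc 2 m, if (d : ℝ) ^ r ≤ x then
            (ArithmeticFunction.moebius d : ℝ) * (x / (d : ℝ) ^ r) ^ k *
              Int.fract (x / (d : ℝ) ^ r) else 0| := by
      have h1 : |(9 : ℝ) / 10 * x ^ k| = 9 / 10 * x ^ k := abs_of_nonneg (by positivity)
      have := abs_sub_abs_le_abs_sub (9 / 10 * x ^ k)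
        (-(∑ d ∈ Finset.Icc 2 m, if (d : ℝ) ^ r ≤ x then
            (ArithmeticFunction.moebius d : ℝ) * (x / (d : ℝ) ^ r) ^ k *
              Int.fract (x / (d : ℝ) ^ r) else 0))
      rw [abs_neg, sub_neg_eq_add, h1] at this
      linarith
    calc (1 : ℝ) / 10 * x ^ k ≤ 9 / 10 * x ^ k - 3 / 4 * x ^ k := by linarith
      _ ≤ _ := habs
  have := le_limsup_of_frequently_le hfreq hbdd
  linarith
end

section
/- For positive integers r, k ≥ 1, the partial sum of the generalized Jordan totient satisfies Σ_{n ≤ x} J_{k-1}^r(n) = (1/k) Σ_{j=0}^{k-1} C(k,j) B_j Σ_{d^r ≤ x} μ(d)(x/d^r − {x/d^r})^{k−j}, where B_j are the Bernoulli numbers with convention B_1 = 1/2. -/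
open Finset ArithmeticFunction ArithmeticFunction.Moebius in
lemma squarefree_prod_primes' {Q : Finset ℕ} (h : ∀ p ∈ Q, p.Prime) :
    Squarefree (∏ p ∈ Q, p) := by
  induction Q using Finset.cons_induction with
  | empty => simpa using squarefree_one
  | cons a s ha ih =>
    rw [Finset.prod_cons]
    have hpa := h a (Finset.mem_cons_self ..)
    have hcop : Nat.Coprime a (∏ p ∈ s, p) := Nat.Coprime.prod_right fun q hq =>
      (Nat.coprime_primes hpa (h q (Finset.mem_cons_of_mem hq))).2
        (by rintro rfl; exact ha hq)
    rw [Nat.squarefree_mul hcop]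
    exact ⟨hpa.squarefree, ih fun p hp => h p (Finset.mem_cons_of_mem hp)⟩

lemma prod_pow_dvd_of_prime' {Q : Finset ℕ} {n r : ℕ} (hQ : ∀ p ∈ Q, p.Prime)
    (hdvd : ∀ p ∈ Q, p ^ r ∣ n) : (∏ p ∈ Q, p ^ r) ∣ n := by
  induction Q using Finset.cons_induction with
  | empty => simpa using one_dvd n
  | cons a s ha ih =>
    rw [Finset.prod_cons]
    have hpa := hQ a (Finset.mem_cons_self ..)
    have hcop : Nat.Coprime (a ^ r) (∏ p ∈ s, p ^ r) := by
      apply Nat.Coprime.pow_left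
      exact Nat.Coprime.prod_right fun q hq => Nat.Coprime.pow_right _
        ((Nat.coprime_primes hpa (hQ q (Finset.mem_cons_of_mem hq))).2
          (by rintro rfl; exact ha hq))
    exact hcop.mul_dvd_of_dvd_of_dvd (hdvd a (Finset.mem_cons_self ..))
      (ih (fun p hp => hQ p (Finset.mem_cons_of_mem hp))
        (fun p hp => hdvd p (Finset.mem_cons_of_mem hp)))

open Finset ArithmeticFunction ArithmeticFunction.Moebius in
lemma sum_moebius_divisors' (m : ℕ) :
    ∑ d ∈ m.divisors, (μ d : ℤ) = if m = 1 then 1 else 0 := by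
  rw [← ArithmeticFunction.coe_mul_zeta_apply, ArithmeticFunction.moebius_mul_coe_zeta,
    ArithmeticFunction.one_apply]

open Finset ArithmeticFunction ArithmeticFunction.Moebius Classical in
lemma indicator_sum' {r : ℕ} (hr : 1 ≤ r) {n : ℕ} (hn : n ≠ 0) {k' : ℕ} (t : Fin k' → ℕ) :
    ∑ d ∈ n.divisors, (if Squarefree d ∧ d ^ r ∣ n ∧ ∀ i, d ^ r ∣ t i then (μ d : ℤ) else 0)
      = if (∃ p : ℕ, p.Prime ∧ p ^ r ∣ n ∧ ∀ i, p ^ r ∣ t i) then 0 else 1 := by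
  classical
  set Q : Finset ℕ := n.primeFactors.filter (fun p => p ^ r ∣ n ∧ ∀ i, p ^ r ∣ t i) with hQdef
  have hQp : ∀ p ∈ Q, p.Prime := fun p hp =>
    Nat.prime_of_mem_primeFactors (Finset.mem_filter.1 hp).1
  set m : ℕ := ∏ p ∈ Q, p with hmdef
  have hmsf : Squarefree m := squarefree_prod_primes' hQp
  have hmne : m ≠ 0 := hmsf.ne_zero
  have hmfac : m.primeFactors = Q := Nat.primeFactors_prod hQp
  have hset : n.divisors.filter
      (fun d => Squarefree d ∧ d ^ r ∣ n ∧ ∀ i, d ^ r ∣ t i) = m.divisors := by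
    ext d
    rw [Finset.mem_filter, Nat.mem_divisors, Nat.mem_divisors]
    constructor
    · rintro ⟨⟨hdn, -⟩, hsf, hdrn, hdrt⟩
      refine ⟨?_, hmne⟩
      have hsub : d.primeFactors ⊆ Q := by
        intro p hp
        have hpp := Nat.prime_of_mem_primeFactors hp
        have hpd : p ∣ d := Nat.dvd_of_mem_primeFactors hp
        have hpr : p ^ r ∣ d ^ r := pow_dvd_pow_of_dvd hpd r
        refine Finset.mem_filter.2 ⟨Nat.mem_primeFactors.2 ⟨hpp, dvd_trans hpd hdn, hn⟩,
          hpr.trans hdrn, fun i => (hpr.trans (hdrt i))⟩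
      calc d = ∏ p ∈ d.primeFactors, p := (Nat.prod_primeFactors_of_squarefree hsf).symm
        _ ∣ ∏ p ∈ Q, p := Finset.prod_dvd_prod_of_subset _ _ _ hsub
    · rintro ⟨hdm, -⟩
      have hsf : Squarefree d := hmsf.squarefree_of_dvd hdm
      have hsub : d.primeFactors ⊆ Q := hmfac ▸ Nat.primeFactors_mono hdm hmne
      have hdr : d ^ r = ∏ p ∈ d.primeFactors, p ^ r := by
        conv_lhs => rw [← Nat.prod_primeFactors_of_squarefree hsf]
        exact (Finset.prod_pow _ _ _).symm
      have hdrn : d ^ r ∣ n := by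
        rw [hdr]
        exact prod_pow_dvd_of_prime' (fun p hp => Nat.prime_of_mem_primeFactors hp)
          (fun p hp => (Finset.mem_filter.1 (hsub hp)).2.1)
      refine ⟨⟨dvd_trans (dvd_pow_self d (Nat.one_le_iff_ne_zero.1 hr)) hdrn, hn⟩, hsf, hdrn,
        fun i => ?_⟩
      rw [hdr]
      exact prod_pow_dvd_of_prime' (fun p hp => Nat.prime_of_mem_primeFactors hp)
        (fun p hp => (Finset.mem_filter.1 (hsub hp)).2.2 i)
  rw [← Finset.sum_filter, hset, sum_moebius_divisors']
  have hm1 : m = 1 ↔ ¬ ∃ p : ℕ, p.Prime ∧ p ^ r ∣ n ∧ ∀ i, p ^ r ∣ t i := by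
    rw [hmdef, Finset.prod_eq_one_iff_of_one_le' ?h1]
    case h1 => exact fun p hp => (hQp p hp).one_lt.le
    constructor
    · rintro h ⟨p, hp, hprn, hprt⟩
      have hpQ : p ∈ Q := Finset.mem_filter.2
        ⟨Nat.mem_primeFactors.2 ⟨hp, (dvd_pow_self p (Nat.one_le_iff_ne_zero.1 hr)).trans hprn,
          hn⟩, hprn, hprt⟩
      exact hp.ne_one (h p hpQ)
    · intro h p hpQ
      obtain ⟨hpf, h1, h2⟩ := Finset.mem_filter.1 hpQ
      exact absurd ⟨p, Nat.prime_of_mem_primeFactors hpf, h1, h2⟩ h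
  by_cases hbad : ∃ p : ℕ, p.Prime ∧ p ^ r ∣ n ∧ ∀ i, p ^ r ∣ t i
  · rw [if_pos hbad, if_neg (fun h => (hm1.1 h) hbad)]
  · rw [if_neg hbad, if_pos (hm1.2 hbad)]

/-- The generalized Jordan totient `J_k^r(n)`. -/
noncomputable def genJordan (r k n : ℕ) : ℕ :=
  Nat.card {t : Fin k → ℕ // (∀ i, 1 ≤ t i ∧ t i ≤ n) ∧
    ¬ ∃ p : ℕ, p.Prime ∧ p ^ r ∣ n ∧ ∀ i, p ^ r ∣ t i}

open Finset ArithmeticFunction ArithmeticFunction.Moebius in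
lemma genJordan_eq_sum' {r : ℕ} (hr : 1 ≤ r) (k' : ℕ) {n : ℕ} (hn : n ≠ 0) :
    (genJordan r k' n : ℤ) = ∑ d ∈ n.divisors,
      if Squarefree d ∧ d ^ r ∣ n then (μ d : ℤ) * ((n / d ^ r : ℕ) : ℤ) ^ k' else 0 := by
  classical
  have hcard : genJordan r k' n = ((Fintype.piFinset fun _ : Fin k' => Finset.Icc 1 n).filter
      (fun t => ¬ ∃ p : ℕ, p.Prime ∧ p ^ r ∣ n ∧ ∀ i, p ^ r ∣ t i)).card := by
    rw [genJordan]
    rw [Nat.card_congr (Equiv.subtypeEquivRight (q := fun t => t ∈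
      ((Fintype.piFinset fun _ : Fin k' => Finset.Icc 1 n).filter
      (fun t => ¬ ∃ p : ℕ, p.Prime ∧ p ^ r ∣ n ∧ ∀ i, p ^ r ∣ t i))) ?_)]
    · rw [Nat.card_eq_finsetCard]
    · intro t
      simp [Fintype.mem_piFinset, Finset.mem_Icc]
  rw [hcard, Finset.card_filter]
  push_cast
  have h1 : ∀ t ∈ (Fintype.piFinset fun _ : Fin k' => Finset.Icc 1 n),
      (if (¬ ∃ p : ℕ, p.Prime ∧ p ^ r ∣ n ∧ ∀ i, p ^ r ∣ t i) then (1 : ℤ) else 0)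
      = ∑ d ∈ n.divisors,
        (if Squarefree d ∧ d ^ r ∣ n ∧ ∀ i, d ^ r ∣ t i then (μ d : ℤ) else 0) := by
    intro t _
    rw [indicator_sum' hr hn t, ite_not]
  rw [Finset.sum_congr rfl h1, Finset.sum_comm]
  refine Finset.sum_congr rfl fun d _ => ?_
  by_cases hc : Squarefree d ∧ d ^ r ∣ n
  · rw [if_pos hc]
    have h2 : ∀ t : Fin k' → ℕ, (Squarefree d ∧ d ^ r ∣ n ∧ ∀ i, d ^ r ∣ t i) ↔
        (∀ i, d ^ r ∣ t i) := by
      intro t; constructor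
      · exact fun h => h.2.2
      · exact fun h => ⟨hc.1, hc.2, h⟩
    simp_rw [h2]
    rw [← Finset.sum_filter]
    have h3 : (Fintype.piFinset fun _ : Fin k' => Finset.Icc 1 n).filter
        (fun t => ∀ i, d ^ r ∣ t i)
        = Fintype.piFinset fun _ : Fin k' => (Finset.Icc 1 n).filter (d ^ r ∣ ·) := by
      ext t
      simp [Fintype.mem_piFinset, Finset.mem_filter, forall_and]
    rw [h3, Finset.sum_const, Fintype.card_piFinset]
    have h4 : ((Finset.Icc 1 n).filter (d ^ r ∣ ·)).card = n / d ^ r := by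
      rw [show Finset.Icc 1 n = Finset.Ioc 0 n from rfl]
      exact Nat.Ioc_filter_dvd_card_eq_div n (d ^ r)
    rw [Finset.prod_const, h4]
    simp [mul_comm, Finset.card_univ]
  · rw [if_neg hc]
    refine Finset.sum_eq_zero fun t _ => ?_
    exact if_neg (fun h => hc ⟨h.1, h.2.1⟩)

open Finset in
lemma faulhaber_Icc' {k : ℕ} (hk : 1 ≤ k) (M : ℕ) :
    ∑ m ∈ Finset.Icc 1 M, (m : ℚ) ^ (k - 1) =
      (1 / (k : ℚ)) * ∑ j ∈ Finset.range k, (k.choose j : ℚ) * (bernoulli' j) *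
        (M : ℚ) ^ (k - j) := by
  obtain ⟨p, rfl⟩ : ∃ p, k = p + 1 := ⟨k - 1, (Nat.succ_pred_eq_of_pos hk).symm⟩
  rw [← Finset.Ico_add_one_right_eq_Icc]
  rw [show p + 1 - 1 = p from rfl, sum_Ico_pow M p]
  rw [Finset.mul_sum]
  refine Finset.sum_congr rfl fun j hj => ?_
  have : ((p : ℚ) + 1) ≠ 0 := by positivity
  push_cast
  field_simp

open Finset ArithmeticFunction ArithmeticFunction.Moebius in
lemma key_rat' (r k N : ℕ) (hr : 1 ≤ r) (hk : 1 ≤ k) :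
    (∑ n ∈ Finset.Icc 1 N, (genJordan r (k - 1) n : ℚ)) =
      (1 / (k : ℚ)) * ∑ j ∈ Finset.range k, (k.choose j : ℚ) * (bernoulli' j) *
        ∑ d ∈ Finset.Icc 1 N, (μ d : ℚ) * ((N / d ^ r : ℕ) : ℚ) ^ (k - j) := by
  classical
  have stepA : (∑ n ∈ Finset.Icc 1 N, (genJordan r (k - 1) n : ℚ)) =
      ∑ n ∈ Finset.Icc 1 N, ∑ d ∈ Finset.Icc 1 N,
        (if d ^ r ∣ n then (μ d : ℚ) * ((n / d ^ r : ℕ) : ℚ) ^ (k - 1) else 0) := by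
    refine Finset.sum_congr rfl fun n hn => ?_
    obtain ⟨hn1, hn2⟩ := Finset.mem_Icc.1 hn
    have hne : n ≠ 0 := by omega
    have h0 : (genJordan r (k - 1) n : ℚ) = ∑ d ∈ n.divisors,
        if Squarefree d ∧ d ^ r ∣ n then (μ d : ℚ) * ((n / d ^ r : ℕ) : ℚ) ^ (k - 1) else 0 := by
      have := congrArg (fun z : ℤ => (z : ℚ)) (genJordan_eq_sum' hr (k - 1) hne)
      simpa only [Int.cast_sum, apply_ite (fun z : ℤ => (z : ℚ)), Int.cast_mul, Int.cast_pow,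
        Int.cast_natCast, Int.cast_zero] using this
    rw [h0]
    have h1 : ∀ d : ℕ, (if Squarefree d ∧ d ^ r ∣ n
        then (μ d : ℚ) * ((n / d ^ r : ℕ) : ℚ) ^ (k - 1) else 0)
        = (if d ^ r ∣ n then (μ d : ℚ) * ((n / d ^ r : ℕ) : ℚ) ^ (k - 1) else 0) := by
      intro d
      by_cases hsf : Squarefree d
      · simp [hsf]
      · simp [hsf, moebius_eq_zero_of_not_squarefree hsf]
    simp_rw [h1]
    refine Finset.sum_subset ?_ ?_
    · intro d hd
      exact Finset.mem_Icc.2 ⟨Nat.pos_of_mem_divisors hd,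
        le_trans (Nat.le_of_dvd (by omega) (Nat.dvd_of_mem_divisors hd)) hn2⟩
    · intro d _ hd
      refine if_neg fun hdvd => hd ?_
      exact Nat.mem_divisors.2 ⟨dvd_trans (dvd_pow_self d (by omega)) hdvd, hne⟩
  rw [stepA, Finset.sum_comm]
  have stepB : ∀ d ∈ Finset.Icc 1 N,
      (∑ n ∈ Finset.Icc 1 N, if d ^ r ∣ n then (μ d : ℚ) * ((n / d ^ r : ℕ) : ℚ) ^ (k - 1) else 0)
      = (μ d : ℚ) * ∑ m ∈ Finset.Icc 1 (N / d ^ r), (m : ℚ) ^ (k - 1) := by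
    intro d hd
    have hd1 : 1 ≤ d := (Finset.mem_Icc.1 hd).1
    have hdr : 0 < d ^ r := Nat.pow_pos hd1
    rw [← Finset.sum_filter, Finset.mul_sum]
    refine Finset.sum_bij' (fun n _ => n / d ^ r) (fun m _ => d ^ r * m) ?_ ?_ ?_ ?_ ?_
    · intro n hn
      obtain ⟨hn', hdvd⟩ := Finset.mem_filter.1 hn
      obtain ⟨h1, h2⟩ := Finset.mem_Icc.1 hn'
      refine Finset.mem_Icc.2 ⟨Nat.div_pos (Nat.le_of_dvd (by omega) hdvd) hdr,
        Nat.div_le_div_right h2⟩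
    · intro m hm
      obtain ⟨h1, h2⟩ := Finset.mem_Icc.1 hm
      refine Finset.mem_filter.2 ⟨Finset.mem_Icc.2 ⟨Nat.mul_pos hdr h1, ?_⟩, Dvd.intro _ rfl⟩
      show d ^ r * m ≤ N
      rw [mul_comm]
      exact (Nat.le_div_iff_mul_le hdr).1 h2
    · intro n hn
      exact Nat.mul_div_cancel' (Finset.mem_filter.1 hn).2
    · intro m hm
      exact Nat.mul_div_cancel_left m hdr
    · intro n hn
      rfl
  rw [Finset.sum_congr rfl stepB]
  have stepC : ∀ d : ℕ, (μ d : ℚ) * ∑ m ∈ Finset.Icc 1 (N / d ^ r), (m : ℚ) ^ (k - 1)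
      = ∑ j ∈ Finset.range k, (1 / (k : ℚ)) * ((k.choose j : ℚ) * (bernoulli' j) *
          ((μ d : ℚ) * ((N / d ^ r : ℕ) : ℚ) ^ (k - j))) := by
    intro d
    rw [faulhaber_Icc' hk, Finset.mul_sum, Finset.mul_sum]
    exact Finset.sum_congr rfl fun j _ => by ring
  rw [Finset.sum_congr rfl fun d _ => stepC d, Finset.sum_comm]
  simp only [Finset.mul_sum]

open Finset ArithmeticFunction ArithmeticFunction.Moebius

theorem sum_genJordan_eq_bernoulli_sum (r k : ℕ) (hr : 1 ≤ r) (hk : 1 ≤ k) (x : ℝ) (hx : 1 ≤ x) :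
    (∑ n ∈ Finset.Icc 1 ⌊x⌋₊, (genJordan r (k - 1) n : ℝ)) =
      (1 / (k : ℝ)) * ∑ j ∈ Finset.range k, (k.choose j : ℝ) * (bernoulli' j : ℝ) *
        ∑ d ∈ Finset.Icc 1 ⌊x⌋₊, if (d : ℝ) ^ r ≤ x then
          (ArithmeticFunction.moebius d : ℝ) *
            (x / (d : ℝ) ^ r - Int.fract (x / (d : ℝ) ^ r)) ^ (k - j) else 0 := by
  classical
  have hx0 : (0 : ℝ) ≤ x := by linarith
  set N := ⌊x⌋₊ with hN
  have hterm : ∀ j ∈ Finset.range k, ∀ d ∈ Finset.Icc 1 N,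
      (if (d : ℝ) ^ r ≤ x then (ArithmeticFunction.moebius d : ℝ) *
          (x / (d : ℝ) ^ r - Int.fract (x / (d : ℝ) ^ r)) ^ (k - j) else 0)
      = (μ d : ℝ) * ((N / d ^ r : ℕ) : ℝ) ^ (k - j) := by
    intro j hj d hd
    have hd1 : 1 ≤ d := (Finset.mem_Icc.1 hd).1
    have hdr : (0 : ℝ) < (d : ℝ) ^ r := by positivity
    have hjk : j < k := Finset.mem_range.1 hj
    by_cases hc : (d : ℝ) ^ r ≤ x
    · rw [if_pos hc]
      congr 2
      have h0 : (0 : ℝ) ≤ x / (d : ℝ) ^ r := div_nonneg hx0 hdr.le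
      rw [Int.self_sub_fract, ← natCast_floor_eq_intCast_floor h0]
      have : x / (d : ℝ) ^ r = x / ((d ^ r : ℕ) : ℝ) := by push_cast; ring
      rw [this, Nat.floor_div_natCast]
    · rw [if_neg hc]
      have hlt : N < d ^ r := by
        have h1 : (N : ℝ) ≤ x := Nat.floor_le hx0
        have h2 : x < ((d ^ r : ℕ) : ℝ) := by push_cast; linarith [lt_of_not_ge hc]
        exact_mod_cast h1.trans_lt h2
      rw [Nat.div_eq_of_lt hlt]
      rw [Nat.cast_zero, zero_pow (by omega), mul_zero]
  have hkey := congrArg (fun q : ℚ => (q : ℝ)) (key_rat' r k N hr hk)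
  push_cast at hkey
  calc (∑ n ∈ Finset.Icc 1 N, (genJordan r (k - 1) n : ℝ))
      = (1 / (k : ℝ)) * ∑ j ∈ Finset.range k, (k.choose j : ℝ) * (bernoulli' j : ℝ) *
        ∑ d ∈ Finset.Icc 1 N, (μ d : ℝ) * ((N / d ^ r : ℕ) : ℝ) ^ (k - j) := hkey
    _ = _ := by
        congr 1
        refine Finset.sum_congr rfl fun j hj => ?_
        congr 1
        exact (Finset.sum_congr rfl fun d hd => (hterm j hj d hd).symm)
end
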